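/- Let Δ, b ∈ ℂ with b ≠ 0, and let g be a polynomial in one variable over ℂ such that (μ+Δλ)·g(μ) = (bλ+μ)·g(λ+μ) for all λ, μ ∈ ℂ. Then g is a constant polynomial, and if g ≠ 0 then Δ = b. -/

import Mathlib

/-- H-part cocycle condition for extensions `0 → ℂc_γ → E → M(α,Δ) → 0` over `W(b)` with
`α + γ = 0`: if `b ≠ 0` and `(μ+Δλ)·g(μ) = (bλ+μ)·g(λ+μ)` for all `λ, μ ∈ ℂ`, then `g` is a
constant polynomial, and if moreover `g ≠ 0` then `Δ = b`. -/
theorem stmt_2 (Δ b : ℂ) (hb : b ≠ 0) (g : Polynomial ℂ)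
    (hg : ∀ lam mu : ℂ,
      (mu + Δ * lam) * g.eval mu = (b * lam + mu) * g.eval (lam + mu)) :
    (∃ c : ℂ, g = Polynomial.C c) ∧ (g ≠ 0 → Δ = b) := by
  set c : ℂ := Δ * g.eval 0 / b with hc
  have key : ∀ lam : ℂ, lam ≠ 0 → g.eval lam = c := by
    intro lam hlam
    have h1 : Δ * lam * g.eval 0 = b * lam * g.eval lam := by
      simpa using hg lam 0
    rw [hc]
    field_simp
    exact mul_left_cancel₀ hlam (by linear_combination -h1)
  have hgC : g = Polynomial.C c := by
    have hsub : g - Polynomial.C c = 0 := by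
      apply Polynomial.eq_zero_of_infinite_isRoot
      apply Set.Infinite.mono (s := {x : ℂ | x ≠ 0})
      · intro x hx
        simp only [Set.mem_setOf_eq, Polynomial.IsRoot, Polynomial.eval_sub,
          Polynomial.eval_C]
        rw [key x hx]; ring
      · have : ({0} : Set ℂ).Finite := Set.finite_singleton 0
        have h2 := this.infinite_compl
        convert h2 using 1
        ext x; simp

    exact sub_eq_zero.mp hsub
  refine ⟨⟨c, hgC⟩, fun hg0 => ?_⟩
  have hc0 : c ≠ 0 := by
    intro h
    apply hg0
    rw [hgC, h, map_zero]
  have he0 : g.eval 0 = c := by rw [hgC]; simp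
  have : Δ * c = b * c := by
    rw [hc] at *
    field_simp at he0 ⊢
    linear_combination -Δ * he0
  exact mul_right_cancel₀ hc0 this
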